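/- For every positive integer n, the number of distinct diagrams of staircase tableaux of size n that use only the symbols α and β — i.e., the number of distinct sets of box positions that occur as the set of nonempty boxes of some staircase tableau of size n containing only α's and β's — equals n!. -/

import Mathlib

inductive SLetter : Type
  | A | B | G | D
deriving DecidableEq, Repr

instance : Fintype SLetter where
  elems := {SLetter.A, SLetter.B, SLetter.G, SLetter.D}
  complete := by intro x; cases x <;> decide

/-- A filling `T` of the staircase Young diagram of shape `(n, n-1, …, 1)`
(boxes `(i,j)` with `i + j < n`, row `i` from the top, column `j` from the left,
diagonal boxes those with `i + j + 1 = n`) is a staircase tableau if: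
boxes outside the shape are unused (empty); no diagonal box is empty;
all boxes to the left of a `β` or `δ` in its row are empty;
all boxes above an `α` or `γ` in its column are empty. -/
def IsStaircase (n : ℕ) (T : Fin n → Fin n → Option SLetter) : Prop :=
  (∀ i j : Fin n, n ≤ (i : ℕ) + (j : ℕ) → T i j = none) ∧
  (∀ i j : Fin n, (i : ℕ) + (j : ℕ) + 1 = n → T i j ≠ none) ∧
  (∀ i j j' : Fin n, j' < j → (T i j = some SLetter.B ∨ T i j = some SLetter.D) →
      T i j' = none) ∧
  (∀ i i' j : Fin n, i' < i → (T i j = some SLetter.A ∨ T i j = some SLetter.G) →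
      T i' j = none)

instance (n : ℕ) : DecidablePred (IsStaircase n) := fun T => by
  unfold IsStaircase; infer_instance

/-- The staircase tableaux of size `n`. -/
def StaircaseTableau (n : ℕ) : Type :=
  {T : Fin n → Fin n → Option SLetter // IsStaircase n T}

instance (n : ℕ) : Fintype (StaircaseTableau n) := Subtype.fintype _

instance (n : ℕ) : DecidableEq (StaircaseTableau n) := Subtype.instDecidableEq

/-- The number of boxes of `T` filled with the symbol `x`. -/
def countLetter (n : ℕ) (T : Fin n → Fin n → Option SLetter) (x : SLetter) : ℕ :=
  (Finset.univ.filter (fun p : Fin n × Fin n => T p.1 p.2 = some x)).card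

/-- The label of the nearest labeled box strictly to the right of `(i,j)` in row `i`. -/
def rightLabel (n : ℕ) (T : Fin n → Fin n → Option SLetter) (i j : Fin n) : Option SLetter :=
  List.findSome? (fun j' => T i j') ((List.finRange n).drop ((j : ℕ) + 1))

/-- The label of the nearest labeled box strictly below `(i,j)` in column `j`. -/
def belowLabel (n : ℕ) (T : Fin n → Fin n → Option SLetter) (i j : Fin n) : Option SLetter :=
  List.findSome? (fun i' => T i' j) ((List.finRange n).drop ((i : ℕ) + 1))

/-- Whether the (empty) box `(i,j)` receives a `q` in the weight of `T`:
an empty box seeing a `δ` to its right gets `q`; an empty box seeing an `α` or `γ` to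
its right and a `β` or `γ` below it gets `q`; all other (empty) boxes get `1`. -/
def boxQ (n : ℕ) (T : Fin n → Fin n → Option SLetter) (i j : Fin n) : Bool :=
  match T i j with
  | some _ => false
  | none =>
    match rightLabel n T i j, belowLabel n T i j with
    | some SLetter.D, _ => true
    | some SLetter.A, some SLetter.B => true
    | some SLetter.A, some SLetter.G => true
    | some SLetter.G, some SLetter.B => true
    | some SLetter.G, some SLetter.G => true
    | _, _ => false

/-- The exponent of `q` in the weight of `T`. -/
def qCount (n : ℕ) (T : Fin n → Fin n → Option SLetter) : ℕ :=
  (Finset.univ.filter (fun p : Fin n × Fin n => boxQ n T p.1 p.2 = true)).card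

/-- The type of `T`, as a word in `Fin n → Bool`, read off the diagonal boxes from
northeast (index `0`) to southwest (index `n-1`): `true` (a `•`) for each `α` or `δ`,
`false` (a `∘`) for each `β` or `γ`. -/
def typeWord (n : ℕ) (T : Fin n → Fin n → Option SLetter) : Fin n → Bool := fun i =>
  match T i ⟨n - 1 - (i : ℕ), by have := i.isLt; omega⟩ with
  | some SLetter.A => true
  | some SLetter.D => true
  | _ => false

/-- `t(T)`, the number of `•`'s in the type of `T`. -/
def bulletCount (n : ℕ) (T : Fin n → Fin n → Option SLetter) : ℕ :=
  (Finset.univ.filter (fun i : Fin n => typeWord n T i = true)).card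

/-- The weight of a staircase tableau: the product of all its labels, with each empty
box contributing `q` or `1` according to the rules (`u` is set to `1`). -/
def stWt {R : Type*} [CommSemiring R] (n : ℕ) (a b g d q : R)
    (T : Fin n → Fin n → Option SLetter) : R :=
  a ^ countLetter n T SLetter.A * b ^ countLetter n T SLetter.B *
    g ^ countLetter n T SLetter.G * d ^ countLetter n T SLetter.D * q ^ qCount n T

/-- The fugacity partition function `Z_n(y; α, β, γ, δ; q) = Σ_T wt(T) y^{t(T)}`,
summed over all staircase tableaux of size `n`. -/
def stZ (R : Type*) [CommSemiring R] (n : ℕ) (y a b g d q : R) : R :=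
  ∑ T : StaircaseTableau n, stWt n a b g d q T.val * y ^ bulletCount n T.val

/-- The generating polynomial `Z_σ(α, β, γ, δ; q)` of staircase tableaux of a given
type `σ` (encoded as a list of booleans, `true` = `•`, `false` = `∘`). -/
def stZw (R : Type*) [CommSemiring R] (w : List Bool) (a b g d q : R) : R :=
  ∑ T ∈ Finset.univ.filter
      (fun T : StaircaseTableau w.length => List.ofFn (typeWord w.length T.val) = w),
    stWt w.length a b g d q T.val


/-- The diagram of a staircase tableau: the set of positions of its nonempty boxes. -/
def stDiagram (n : ℕ) (T : Fin n → Fin n → Option SLetter) : Finset (Fin n × Fin n) :=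
  Finset.univ.filter (fun p : Fin n × Fin n => T p.1 p.2 ≠ none)


namespace SDaux

/-- Non-row-minimal box: some box of `D` strictly to its left in the same row. -/
def NonMin (D : Finset (ℕ × ℕ)) (p : ℕ × ℕ) : Prop :=
  ∃ q ∈ D, q.1 = p.1 ∧ q.2 < p.2

/-- Every non-row-minimal box has an empty column above it (rows counted from the
bottom, so "above" means larger first coordinate). -/
def Cond3 (D : Finset (ℕ × ℕ)) : Prop :=
  ∀ p ∈ D, NonMin D p → ∀ r', p.1 < r' → (r', p.2) ∉ D

def Bnd (n : ℕ) (D : Finset (ℕ × ℕ)) : Prop := ∀ p ∈ D, p.2 ≤ p.1 ∧ p.1 < n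

def Stair (n : ℕ) : Finset (ℕ × ℕ) :=
  (Finset.range n ×ˢ Finset.range n).filter fun p => p.2 ≤ p.1

open Classical in
/-- The abstract diagrams of size `n` (rows counted from the bottom). -/
noncomputable def Diags (n : ℕ) : Finset (Finset (ℕ × ℕ)) :=
  (Stair n).powerset.filter fun D => (∀ r < n, (r, r) ∈ D) ∧ Cond3 D

open Classical in
/-- Columns `< n` all of whose boxes are row-minimal. -/
noncomputable def good (D : Finset (ℕ × ℕ)) (n : ℕ) : Finset ℕ :=
  (Finset.range n).filter fun j => ∀ p ∈ D, p.2 = j → ¬ NonMin D p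

lemma mem_Stair {n : ℕ} {p : ℕ × ℕ} : p ∈ Stair n ↔ p.2 ≤ p.1 ∧ p.1 < n := by
  simp only [Stair, Finset.mem_filter, Finset.mem_product, Finset.mem_range]
  constructor
  · rintro ⟨⟨h1, h2⟩, h3⟩; exact ⟨h3, h1⟩
  · rintro ⟨h1, h2⟩; exact ⟨⟨h2, lt_of_le_of_lt h1 h2⟩, h1⟩

lemma mem_Diags {n : ℕ} {D : Finset (ℕ × ℕ)} :
    D ∈ Diags n ↔ Bnd n D ∧ (∀ r < n, (r, r) ∈ D) ∧ Cond3 D := by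
  simp only [Diags, Finset.mem_filter, Finset.mem_powerset]
  constructor
  · rintro ⟨h1, h2⟩
    exact ⟨fun p hp => mem_Stair.1 (h1 hp), h2⟩
  · rintro ⟨h1, h2⟩
    exact ⟨fun p hp => mem_Stair.2 (h1 p hp), h2⟩

lemma mem_good {n : ℕ} {D : Finset (ℕ × ℕ)} {j : ℕ} :
    j ∈ good D n ↔ j < n ∧ ∀ p ∈ D, p.2 = j → ¬ NonMin D p := by
  simp [good, Finset.mem_filter, Finset.mem_range]

/-! ### The insertion of a new top row -/

def bwd (n : ℕ) (D' : Finset (ℕ × ℕ)) (S : Finset ℕ) : Finset (ℕ × ℕ) :=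
  D' ∪ (insert n S).image (fun j => (n, j))

lemma mem_bwd {n : ℕ} {D' : Finset (ℕ × ℕ)} {S : Finset ℕ} {p : ℕ × ℕ} :
    p ∈ bwd n D' S ↔ p ∈ D' ∨ (p.1 = n ∧ (p.2 = n ∨ p.2 ∈ S)) := by
  simp only [bwd, Finset.mem_union, Finset.mem_image, Finset.mem_insert, Prod.ext_iff]
  constructor
  · rintro (h | ⟨j, hj, h1, h2⟩)
    · exact Or.inl h
    · refine Or.inr ⟨h1.symm, ?_⟩
      rcases hj with h | h
      · exact Or.inl (by omega)
      · exact Or.inr (h2 ▸ h)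
  · rintro (h | ⟨h1, (h2 | h2)⟩)
    · exact Or.inl h
    · exact Or.inr ⟨p.2, Or.inl h2, h1.symm, rfl⟩
    · exact Or.inr ⟨p.2, Or.inr h2, h1.symm, rfl⟩

lemma nonmin_bwd_low {n : ℕ} {D' : Finset (ℕ × ℕ)} {S : Finset ℕ} (hB : Bnd n D')
    {p : ℕ × ℕ} (hp : p.1 ≠ n) : NonMin (bwd n D' S) p ↔ NonMin D' p := by
  constructor
  · rintro ⟨q, hq, h1, h2⟩
    rcases mem_bwd.1 hq with h | ⟨h, _⟩
    · exact ⟨q, h, h1, h2⟩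
    · omega
  · rintro ⟨q, hq, h1, h2⟩
    exact ⟨q, mem_bwd.2 (Or.inl hq), h1, h2⟩

lemma nonmin_bwd_top {n : ℕ} {D' : Finset (ℕ × ℕ)} {S : Finset ℕ} (hB : Bnd n D')
    {c : ℕ} (hc : c ≤ n) : NonMin (bwd n D' S) (n, c) ↔ ∃ j ∈ S, j < c := by
  constructor
  · rintro ⟨q, hq, h1, h2⟩
    rcases mem_bwd.1 hq with h | ⟨h, (h' | h')⟩
    · exact absurd h1 (by have := (hB q h).2; omega)
    · omega
    · exact ⟨q.2, h', h2⟩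
  · rintro ⟨j, hj, hlt⟩
    exact ⟨(n, j), mem_bwd.2 (Or.inr ⟨rfl, Or.inr hj⟩), rfl, hlt⟩

lemma bwd_mem_Diags {n : ℕ} {D' : Finset (ℕ × ℕ)} {S : Finset ℕ}
    (hD' : D' ∈ Diags n) (hS : S ⊆ good D' n) : bwd n D' S ∈ Diags (n + 1) := by
  obtain ⟨hB, hdiag, hc3⟩ := mem_Diags.1 hD'
  refine mem_Diags.2 ⟨?_, ?_, ?_⟩
  · intro p hp
    rcases mem_bwd.1 hp with h | ⟨h1, (h2 | h2)⟩
    · have := hB p h; omega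
    · omega
    · have := (mem_good.1 (hS h2)).1; omega
  · intro r hr
    rcases Nat.lt_succ_iff_lt_or_eq.1 hr with h | h
    · exact mem_bwd.2 (Or.inl (hdiag r h))
    · exact mem_bwd.2 (Or.inr ⟨h, Or.inl h⟩)
  · intro p hp hnm r' hr' hmem
    rcases mem_bwd.1 hp with h | ⟨h1, _⟩
    · have hpn : p.1 < n := (hB p h).2
      have hnm' : NonMin D' p := (nonmin_bwd_low hB (by omega)).1 hnm
      rcases mem_bwd.1 hmem with h' | ⟨h1', (h2' | h2')⟩
      · exact hc3 p h hnm' r' hr' h'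
      · have := (hB p h).1; omega
      · exact (mem_good.1 (hS h2')).2 p h rfl hnm'
    · -- top row: nothing above
      rcases mem_bwd.1 hmem with h' | ⟨h1', _⟩
      · have := (hB _ h').2; omega
      · omega

def fwdD (n : ℕ) (D : Finset (ℕ × ℕ)) : Finset (ℕ × ℕ) := D.filter fun p => p.1 ≠ n

def fwdS (n : ℕ) (D : Finset (ℕ × ℕ)) : Finset ℕ :=
  (Finset.range n).filter fun j => (n, j) ∈ D

lemma mem_fwdD {n : ℕ} {D : Finset (ℕ × ℕ)} {p : ℕ × ℕ} :
    p ∈ fwdD n D ↔ p ∈ D ∧ p.1 ≠ n := by simp [fwdD]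

lemma mem_fwdS {n : ℕ} {D : Finset (ℕ × ℕ)} {j : ℕ} :
    j ∈ fwdS n D ↔ j < n ∧ (n, j) ∈ D := by simp [fwdS]

lemma nonmin_fwdD {n : ℕ} {D : Finset (ℕ × ℕ)} {p : ℕ × ℕ} (hp : p.1 ≠ n) :
    NonMin (fwdD n D) p ↔ NonMin D p := by
  constructor
  · rintro ⟨q, hq, h1, h2⟩
    exact ⟨q, (mem_fwdD.1 hq).1, h1, h2⟩
  · rintro ⟨q, hq, h1, h2⟩
    exact ⟨q, mem_fwdD.2 ⟨hq, by omega⟩, h1, h2⟩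

lemma fwdD_mem_Diags {n : ℕ} {D : Finset (ℕ × ℕ)} (hD : D ∈ Diags (n + 1)) :
    fwdD n D ∈ Diags n := by
  obtain ⟨hB, hdiag, hc3⟩ := mem_Diags.1 hD
  refine mem_Diags.2 ⟨?_, ?_, ?_⟩
  · intro p hp
    obtain ⟨h1, h2⟩ := mem_fwdD.1 hp
    have := hB p h1; omega
  · intro r hr
    exact mem_fwdD.2 ⟨hdiag r (by omega), by omega⟩
  · intro p hp hnm r' hr' hmem
    obtain ⟨h1, h2⟩ := mem_fwdD.1 hp
    exact hc3 p h1 ((nonmin_fwdD h2).1 hnm) r' hr' (mem_fwdD.1 hmem).1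

lemma fwdS_subset_good {n : ℕ} {D : Finset (ℕ × ℕ)} (hD : D ∈ Diags (n + 1)) :
    fwdS n D ⊆ good (fwdD n D) n := by
  obtain ⟨hB, hdiag, hc3⟩ := mem_Diags.1 hD
  intro j hj
  obtain ⟨hjn, hmem⟩ := mem_fwdS.1 hj
  refine mem_good.2 ⟨hjn, ?_⟩
  intro p hp hpj hnm
  obtain ⟨h1, h2⟩ := mem_fwdD.1 hp
  have hpn : p.1 < n + 1 := (hB p h1).2
  exact hc3 p h1 ((nonmin_fwdD h2).1 hnm) n (by omega) (hpj ▸ hmem)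

lemma bwd_fwd {n : ℕ} {D : Finset (ℕ × ℕ)} (hD : D ∈ Diags (n + 1)) :
    bwd n (fwdD n D) (fwdS n D) = D := by
  obtain ⟨hB, hdiag, hc3⟩ := mem_Diags.1 hD
  ext p
  rw [mem_bwd, mem_fwdD, mem_fwdS]
  constructor
  · rintro (⟨h, _⟩ | ⟨h1, (h2 | ⟨h2, h3⟩)⟩)
    · exact h
    · have : p = (n, n) := Prod.ext h1 h2
      rw [this]; exact hdiag n (by omega)
    · have : p = (n, p.2) := Prod.ext h1 rfl
      rw [this]; exact h3
  · intro hp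
    by_cases h : p.1 = n
    · refine Or.inr ⟨h, ?_⟩
      have := hB p hp
      by_cases h2 : p.2 = n
      · exact Or.inl h2
      · exact Or.inr ⟨by omega, by rwa [← h, Prod.mk.eta]⟩
    · exact Or.inl ⟨hp, h⟩

lemma fwd_bwd_D {n : ℕ} {D' : Finset (ℕ × ℕ)} {S : Finset ℕ} (hB : Bnd n D') :
    fwdD n (bwd n D' S) = D' := by
  ext p
  rw [mem_fwdD, mem_bwd]
  constructor
  · rintro ⟨(h | ⟨h1, _⟩), h2⟩
    · exact h
    · omega
  · intro hp
    have := hB p hp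
    exact ⟨Or.inl hp, by omega⟩

lemma fwd_bwd_S {n : ℕ} {D' : Finset (ℕ × ℕ)} {S : Finset ℕ} (hB : Bnd n D')
    (hS : S ⊆ Finset.range n) : fwdS n (bwd n D' S) = S := by
  ext j
  rw [mem_fwdS, mem_bwd]
  constructor
  · rintro ⟨hjn, (h | ⟨_, (h2 | h2)⟩)⟩
    · have := hB _ h; omega
    · omega
    · exact h2
  · intro hj
    have := Finset.mem_range.1 (hS hj)
    exact ⟨this, Or.inr ⟨rfl, Or.inr hj⟩⟩

/-! ### Good columns of an extended diagram -/

lemma good_bwd {n : ℕ} {D' : Finset (ℕ × ℕ)} {S : Finset ℕ}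
    (hD' : D' ∈ Diags n) (hS : S ⊆ good D' n) :
    good (bwd n D' S) (n + 1) =
      ((good D' n).filter (fun j => j ∈ S → ∀ j' ∈ S, ¬ j' < j)) ∪
        (if S = ∅ then {n} else ∅) := by
  classical
  obtain ⟨hB, hdiag, hc3⟩ := mem_Diags.1 hD'
  have hSr : ∀ j ∈ S, j < n := fun j hj => (mem_good.1 (hS hj)).1
  ext j
  rw [mem_good, Finset.mem_union, Finset.mem_filter]
  by_cases hj : j = n
  · have hng : j ∉ good D' n := fun h => by have := (mem_good.1 h).1; omega
    constructor
    · rintro ⟨-, h⟩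
      right
      have hnn : (n, n) ∈ bwd n D' S := mem_bwd.2 (Or.inr ⟨rfl, Or.inl rfl⟩)
      have := h (n, n) hnn hj.symm
      rw [nonmin_bwd_top hB le_rfl] at this
      have hSe : S = ∅ := by
        by_contra hne
        obtain ⟨a, ha⟩ := Finset.nonempty_iff_ne_empty.2 hne
        exact this ⟨a, ha, hSr a ha⟩
      simp [hSe, hj]
    · rintro (⟨h, -⟩ | h)
      · exact absurd h hng
      · have hSe : S = ∅ := by by_contra hne; simp [hne] at h
        refine ⟨by omega, ?_⟩
        intro p hp hpj
        rcases mem_bwd.1 hp with hmem | ⟨h1, -⟩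
        · have := hB p hmem; omega
        · have hpe : p = (n, n) := Prod.ext h1 (by omega)
          rw [hpe, nonmin_bwd_top hB le_rfl]
          simp [hSe]
  · by_cases hjn : j < n
    · have hiff : (if S = ∅ then ({n} : Finset ℕ) else ∅) = {n} ∨
          (if S = ∅ then ({n} : Finset ℕ) else ∅) = ∅ := by
        split <;> simp
      have hnotif : j ∉ (if S = ∅ then ({n} : Finset ℕ) else ∅) := by
        split <;> simp <;> omega
      constructor
      · rintro ⟨-, h⟩
        left
        refine ⟨mem_good.2 ⟨hjn, ?_⟩, ?_⟩
        · intro p hp hpj hnm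
          have hpn : p.1 < n := (hB p hp).2
          exact h p (mem_bwd.2 (Or.inl hp)) hpj
            ((nonmin_bwd_low hB (by omega)).2 hnm)
        · intro hjS j' hj' hlt
          have hnj : (n, j) ∈ bwd n D' S := mem_bwd.2 (Or.inr ⟨rfl, Or.inr hjS⟩)
          have := h (n, j) hnj rfl
          rw [nonmin_bwd_top hB (by omega)] at this
          exact this ⟨j', hj', hlt⟩
      · rintro (⟨hg, hmin⟩ | h)
        · refine ⟨by omega, ?_⟩
          intro p hp hpj
          rcases mem_bwd.1 hp with hmem | ⟨h1, (h2 | h2)⟩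
          · have hpn : p.1 < n := (hB p hmem).2
            rw [nonmin_bwd_low hB (by omega)]
            exact (mem_good.1 hg).2 p hmem hpj
          · omega
          · have hpe : p = (n, j) := Prod.ext h1 hpj
            rw [hpe, nonmin_bwd_top hB (by omega)]
            rintro ⟨j', hj', hlt⟩
            exact hmin (hpj ▸ h2) j' hj' hlt
        · exact absurd h hnotif
    · have h1 : ¬ (j < n + 1) := by omega
      constructor
      · rintro ⟨h, -⟩; omega
      · rintro (⟨hg, -⟩ | h)
        · have := (mem_good.1 hg).1; omega
        · revert h; split <;> simp <;> omega

lemma min_filter_eq {S : Finset ℕ} (h : S.Nonempty) :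
    S.filter (fun j => ¬ ∃ j' ∈ S, j' < j) = {S.min' h} := by
  classical
  ext j
  simp only [Finset.mem_filter, Finset.mem_singleton]
  constructor
  · rintro ⟨hj, hmin⟩
    refine le_antisymm ?_ (S.min'_le j hj)
    refine S.le_min' _ _ (fun y hy => ?_)
    by_contra hlt
    exact hmin ⟨y, hy, by omega⟩
  · rintro rfl
    refine ⟨S.min'_mem h, ?_⟩
    rintro ⟨j', hj', hlt⟩
    exact absurd (S.min'_le j' hj') (by omega)

lemma good_bwd_card {n : ℕ} {D' : Finset (ℕ × ℕ)} {S : Finset ℕ}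
    (hD' : D' ∈ Diags n) (hS : S ⊆ good D' n) :
    (good (bwd n D' S) (n + 1)).card = (good D' n).card + 1 - S.card := by
  classical
  rw [good_bwd hD' hS]
  have hdisj : Disjoint ((good D' n).filter (fun j => j ∈ S → ∀ j' ∈ S, ¬ j' < j))
      (if S = ∅ then ({n} : Finset ℕ) else ∅) := by
    rw [Finset.disjoint_left]
    intro a ha hb
    have h1 : a < n := (mem_good.1 (Finset.mem_filter.1 ha).1).1
    revert hb; split <;> simp <;> omega
  rw [Finset.card_union_of_disjoint hdisj]
  rcases eq_or_ne S ∅ with rfl | hne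
  · rw [if_pos rfl]
    simp only [Finset.card_singleton]
    rw [Finset.filter_true_of_mem (fun j _ => by simp)]
    simp
  · rw [if_neg hne]
    have hscard : 1 ≤ S.card := Finset.card_pos.2 (Finset.nonempty_iff_ne_empty.2 hne)
    have hSg : S.card ≤ (good D' n).card := Finset.card_le_card hS
    have hfe : (good D' n).filter (fun j => j ∈ S → ∀ j' ∈ S, ¬ j' < j)
        = good D' n \ (S.filter (fun j => ∃ j' ∈ S, j' < j)) := by
      ext j
      simp only [Finset.mem_filter, Finset.mem_sdiff]
      constructor
      · rintro ⟨hg, hc⟩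
        refine ⟨hg, ?_⟩
        rintro ⟨hjS, j', hj', hlt⟩
        exact hc hjS j' hj' hlt
      · rintro ⟨hg, hc⟩
        refine ⟨hg, fun hjS j' hj' hlt => hc ⟨hjS, j', hj', hlt⟩⟩
    rw [hfe, Finset.card_sdiff_of_subset (fun j hj => hS (Finset.mem_filter.1 hj).1)]
    have hcc := Finset.card_filter_add_card_filter_not
      (s := S) (p := fun j => ∃ j' ∈ S, j' < j)
    rw [min_filter_eq (Finset.nonempty_iff_ne_empty.2 hne)] at hcc
    simp only [Finset.card_singleton] at hcc
    simp only [Finset.card_empty]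
    omega

/-! ### The binomial-type sum over the powerset -/

lemma sum_powerset_pow (x : ℕ) (G : Finset ℕ) :
    ∑ S ∈ G.powerset, x ^ (G.card - S.card) = (x + 1) ^ G.card := by
  classical
  induction G using Finset.induction_on with
  | empty => simp
  | @insert a G ha ih =>
    rw [Finset.sum_powerset_insert ha]
    have hca : (insert a G).card = G.card + 1 := Finset.card_insert_of_notMem ha
    have h1 : ∑ S ∈ G.powerset, x ^ ((insert a G).card - S.card)
        = x * ∑ S ∈ G.powerset, x ^ (G.card - S.card) := by
      rw [Finset.mul_sum]
      refine Finset.sum_congr rfl fun S hSm => ?_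
      have hle := Finset.card_le_card (Finset.mem_powerset.1 hSm)
      rw [hca, show G.card + 1 - S.card = (G.card - S.card) + 1 by omega, pow_succ]
      ring
    have h2 : ∑ S ∈ G.powerset, x ^ ((insert a G).card - (insert a S).card)
        = ∑ S ∈ G.powerset, x ^ (G.card - S.card) := by
      refine Finset.sum_congr rfl fun S hSm => ?_
      have hsub := Finset.mem_powerset.1 hSm
      have haS : a ∉ S := fun h => ha (hsub h)
      rw [hca, Finset.card_insert_of_notMem haS]
      congr 1
      omega
    rw [h1, h2, ih, hca, pow_succ]
    ring

/-! ### The main recursion -/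

lemma diags_sum (n : ℕ) : ∀ x : ℕ,
    ∑ D ∈ Diags n, x ^ (good D n).card = ∏ i ∈ Finset.range n, (x + i) := by
  classical
  induction n with
  | zero =>
    intro x
    have h0 : Diags 0 = {∅} := by
      ext D
      rw [mem_Diags, Finset.mem_singleton]
      constructor
      · rintro ⟨hB, -, -⟩
        refine Finset.eq_empty_iff_forall_notMem.2 fun p hp => ?_
        have := (hB p hp).2; omega
      · rintro rfl
        exact ⟨fun p hp => absurd hp (Finset.notMem_empty p),
          fun r hr => by omega, fun p hp => absurd hp (Finset.notMem_empty p)⟩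
    rw [h0]
    simp [good]
  | succ n ih =>
    intro x
    have key : ∑ D ∈ Diags (n + 1), x ^ (good D (n + 1)).card
        = ∑ p ∈ (Diags n).sigma (fun D' => (good D' n).powerset),
            x ^ ((good p.1 n).card + 1 - p.2.card) := by
      refine Finset.sum_bij' (fun D _ => (⟨fwdD n D, fwdS n D⟩ : Σ _ : Finset (ℕ × ℕ), Finset ℕ))
        (fun p _ => bwd n p.1 p.2) ?_ ?_ ?_ ?_ ?_
      · intro D hD
        exact Finset.mem_sigma.2
          ⟨fwdD_mem_Diags hD, Finset.mem_powerset.2 (fwdS_subset_good hD)⟩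
      · intro p hp
        obtain ⟨h1, h2⟩ := Finset.mem_sigma.1 hp
        exact bwd_mem_Diags h1 (Finset.mem_powerset.1 h2)
      · intro D hD
        exact bwd_fwd hD
      · rintro ⟨D', S⟩ hp
        obtain ⟨h1, h2⟩ := Finset.mem_sigma.1 hp
        have hB : Bnd n D' := (mem_Diags.1 h1).1
        have hSr : S ⊆ Finset.range n := by
          intro j hj
          exact Finset.mem_range.2 ((mem_good.1 (Finset.mem_powerset.1 h2 hj)).1)
        simp only []
        rw [fwd_bwd_D hB, fwd_bwd_S hB hSr]
      · intro D hD
        congr 1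
        conv_lhs => rw [← bwd_fwd hD]
        exact good_bwd_card (fwdD_mem_Diags hD) (fwdS_subset_good hD)
    rw [key, Finset.sum_sigma]
    have inner : ∀ D' ∈ Diags n,
        ∑ S ∈ (good D' n).powerset, x ^ ((good D' n).card + 1 - S.card)
          = x * (x + 1) ^ (good D' n).card := by
      intro D' _
      rw [← sum_powerset_pow x (good D' n), Finset.mul_sum]
      refine Finset.sum_congr rfl fun S hSm => ?_
      have hle := Finset.card_le_card (Finset.mem_powerset.1 hSm)
      rw [show (good D' n).card + 1 - S.card = ((good D' n).card - S.card) + 1 by omega,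
        pow_succ]
      ring
    rw [Finset.sum_congr rfl inner, ← Finset.mul_sum, ih (x + 1),
      Finset.prod_range_succ' (fun i => x + i) n]
    have : ∀ i, x + 1 + i = x + (i + 1) := fun i => by ring
    rw [Finset.prod_congr rfl (fun i _ => this i)]
    ring

lemma card_Diags (n : ℕ) : (Diags n).card = n.factorial := by
  have h := diags_sum n 1
  simp only [one_pow] at h
  rw [Finset.sum_const, smul_eq_mul, mul_one] at h
  rw [h]
  rw [← Finset.prod_range_add_one_eq_factorial]
  exact Finset.prod_congr rfl fun i _ => by ring

/-! ### Bridge to staircase tableaux -/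

def em (n : ℕ) : Fin n × Fin n → ℕ × ℕ := fun p => (n - 1 - (p.1 : ℕ), (p.2 : ℕ))

lemma em_fst {n : ℕ} (p : Fin n × Fin n) : (em n p).1 = n - 1 - (p.1 : ℕ) := rfl

lemma em_snd {n : ℕ} (p : Fin n × Fin n) : (em n p).2 = (p.2 : ℕ) := rfl

lemma em_inj (n : ℕ) : Function.Injective (em n) := by
  intro p q h
  have h1 : n - 1 - (p.1 : ℕ) = n - 1 - (q.1 : ℕ) := by
    rw [← em_fst, ← em_fst, h]
  have h2 : (p.2 : ℕ) = (q.2 : ℕ) := by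
    rw [← em_snd, ← em_snd, h]
  have hp := p.1.isLt
  have hq := q.1.isLt
  exact Prod.ext (Fin.ext (by omega)) (Fin.ext h2)

open Classical in
noncomputable def mkT (n : ℕ) (D : Finset (ℕ × ℕ)) : Fin n → Fin n → Option SLetter :=
  fun i j =>
    if (n - 1 - (i : ℕ), (j : ℕ)) ∈ D then
      (if ∃ r', n - 1 - (i : ℕ) < r' ∧ (r', (j : ℕ)) ∈ D then some SLetter.B
        else some SLetter.A)
    else none

lemma count_zero {n : ℕ} {T : Fin n → Fin n → Option SLetter} {x : SLetter}
    (h : countLetter n T x = 0) (i j : Fin n) : T i j ≠ some x := by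
  intro hc
  rw [countLetter, Finset.card_eq_zero] at h
  have : (⟨i, j⟩ : Fin n × Fin n) ∈
      Finset.univ.filter (fun p : Fin n × Fin n => T p.1 p.2 = some x) := by
    simp [hc]
  rw [h] at this
  exact absurd this (Finset.notMem_empty _)

lemma mem_stDiagram_image {n : ℕ} {T : Fin n → Fin n → Option SLetter} {q : ℕ × ℕ} :
    q ∈ (stDiagram n T).image (em n) ↔
      ∃ p : Fin n × Fin n, T p.1 p.2 ≠ none ∧ em n p = q := by
  simp [stDiagram, Finset.mem_image, Finset.mem_filter]

lemma mkT_ne_none {n : ℕ} {D : Finset (ℕ × ℕ)} {i j : Fin n}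
    (h : (n - 1 - (i : ℕ), (j : ℕ)) ∈ D) : mkT n D i j ≠ none := by
  rw [mkT, if_pos h]
  split <;> simp

lemma image_diags (n : ℕ) (hn : 1 ≤ n) :
    ((Finset.univ.filter (fun T : StaircaseTableau n =>
        countLetter n T.val SLetter.G = 0 ∧ countLetter n T.val SLetter.D = 0)).image
      (fun T => stDiagram n T.val)).image (fun A => A.image (em n)) = Diags n := by
  classical
  ext D
  simp only [Finset.mem_image, Finset.mem_filter, Finset.mem_univ, true_and]
  constructor
  · rintro ⟨A, ⟨T, ⟨hG0, hD0⟩, rfl⟩, rfl⟩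
    obtain ⟨h1, h2, h3, h4⟩ := T.2
    have hnG := count_zero hG0
    have hnD := count_zero hD0
    have hbox : ∀ i j : Fin n, T.val i j ≠ none → (i : ℕ) + (j : ℕ) < n := by
      intro i j h
      by_contra hc
      exact h (h1 i j (by omega))
    have hAB : ∀ i j : Fin n, T.val i j ≠ none →
        T.val i j = some SLetter.A ∨ T.val i j = some SLetter.B := by
      intro i j h
      rcases hx : T.val i j with - | x
      · exact absurd hx h
      · cases x with
        | A => exact Or.inl rfl
        | B => exact Or.inr rfl
        | G => exact absurd hx (hnG i j)
        | D => exact absurd hx (hnD i j)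
    refine mem_Diags.2 ⟨?_, ?_, ?_⟩
    · rintro q hq
      obtain ⟨p, hne, rfl⟩ := mem_stDiagram_image.1 hq
      have := hbox p.1 p.2 hne
      have hi := p.1.isLt
      have hj := p.2.isLt
      rw [em_fst, em_snd]
      constructor <;> omega
    · intro r hr
      refine mem_stDiagram_image.2 ⟨⟨⟨n - 1 - r, by omega⟩, ⟨r, hr⟩⟩, ?_, ?_⟩
      · exact h2 _ _ (by simp; omega)
      · refine Prod.ext ?_ rfl
        rw [em_fst]
        simp
        omega
    · rintro q hq hnm r' hr' hmem
      obtain ⟨p, hne, rfl⟩ := mem_stDiagram_image.1 hq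
      obtain ⟨w, hw, hw1, hw2⟩ := hnm
      obtain ⟨p2, hne2, rfl⟩ := mem_stDiagram_image.1 hw
      rw [em_fst, em_fst] at hw1
      rw [em_snd, em_snd] at hw2
      rw [em_fst] at hr'
      have hi := p.1.isLt
      have hi2 := p2.1.isLt
      have hii : p2.1 = p.1 := Fin.ext (by omega)
      have hTA : T.val p.1 p.2 = some SLetter.A := by
        rcases hAB p.1 p.2 hne with h | h
        · exact h
        · have hnone := h3 p.1 p.2 p2.2 (by exact hw2) (Or.inl h)
          rw [← hii] at hnone
          exact absurd hnone hne2
      obtain ⟨p3, hne3, hw3⟩ := mem_stDiagram_image.1 hmem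
      have hw31 : n - 1 - (p3.1 : ℕ) = r' := by
        rw [← em_fst, hw3]
      have hw32 : (p3.2 : ℕ) = (p.2 : ℕ) := by
        rw [← em_snd, hw3, em_snd]
      have hj3 : p3.2 = p.2 := Fin.ext hw32
      have hi3 := p3.1.isLt
      have hlt : p3.1 < p.1 := by
        rw [Fin.lt_def]
        omega
      have hnone := h4 p.1 p3.1 p.2 hlt (Or.inl hTA)
      rw [← hj3] at hnone
      exact hne3 hnone
  · intro hD
    obtain ⟨hB, hdiag, hc3⟩ := mem_Diags.1 hD
    have hst : IsStaircase n (mkT n D) := by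
      refine ⟨?_, ?_, ?_, ?_⟩
      · intro i j hij
        rw [mkT, if_neg]
        intro hmem
        have := hB _ hmem
        have hi := i.isLt
        simp only at this
        omega
      · intro i j hij
        have hj := j.isLt
        refine mkT_ne_none ?_
        have heq : (n : ℕ) - 1 - (i : ℕ) = (j : ℕ) := by omega
        rw [heq]
        exact hdiag _ hj
      · intro i j j' hj' hBD
        have hcond : ((n : ℕ) - 1 - (i : ℕ), (j : ℕ)) ∈ D ∧
            ∃ r', (n : ℕ) - 1 - (i : ℕ) < r' ∧ (r', (j : ℕ)) ∈ D := by
          rcases hBD with h | h <;>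
          · rw [mkT] at h
            split at h
            · split at h
              · exact ⟨by assumption, by assumption⟩
              · simp at h
            · simp at h
        obtain ⟨hm, r', hr'1, hr'2⟩ := hcond
        rw [mkT, if_neg]
        intro hmem'
        have hnm : NonMin D ((n : ℕ) - 1 - (i : ℕ), (j : ℕ)) :=
          ⟨_, hmem', rfl, by exact hj'⟩
        exact hc3 _ hm hnm r' hr'1 hr'2
      · intro i i' j hi' hAG
        have hcond : ¬ ∃ r', (n : ℕ) - 1 - (i : ℕ) < r' ∧ (r', (j : ℕ)) ∈ D := by
          rcases hAG with h | h <;>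
          · rw [mkT] at h
            split at h
            · split at h
              · simp at h
              · assumption
            · simp at h
        rw [mkT, if_neg]
        intro hmem'
        have hii := i.isLt
        have hii' := i'.isLt
        have hlt : (i' : ℕ) < (i : ℕ) := hi'
        exact hcond ⟨(n : ℕ) - 1 - (i' : ℕ), by omega, hmem'⟩
    have hzero : ∀ x, x = SLetter.G ∨ x = SLetter.D → countLetter n (mkT n D) x = 0 := by
      intro x hx
      rw [countLetter, Finset.card_eq_zero, Finset.filter_eq_empty_iff]
      rintro p -
      rw [mkT]
      split
      · split <;> rcases hx with rfl | rfl <;> simp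
      · rcases hx with rfl | rfl <;> simp
    refine ⟨stDiagram n (mkT n D),
      ⟨⟨mkT n D, hst⟩, ⟨hzero _ (Or.inl rfl), hzero _ (Or.inr rfl)⟩, rfl⟩, ?_⟩
    ext q
    rw [mem_stDiagram_image]
    constructor
    · rintro ⟨p, hne, rfl⟩
      rw [mkT] at hne
      by_cases hmem : ((n : ℕ) - 1 - (p.1 : ℕ), (p.2 : ℕ)) ∈ D
      · exact hmem
      · rw [if_neg hmem] at hne
        exact absurd rfl hne
    · intro hq
      have hQ := hB q hq
      have hq1 : q.1 < n := hQ.2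
      have hq2 : q.2 ≤ q.1 := hQ.1
      refine ⟨⟨⟨n - 1 - q.1, by omega⟩, ⟨q.2, by omega⟩⟩, ?_, ?_⟩
      · refine mkT_ne_none ?_
        show ((n : ℕ) - 1 - (n - 1 - q.1), q.2) ∈ D
        have hco : ((n : ℕ) - 1 - (n - 1 - q.1), q.2) = q := Prod.ext (by omega) rfl
        rw [hco]
        exact hq
      · refine Prod.ext ?_ rfl
        rw [em_fst]
        simp
        omega

end SDaux

/-- For every positive integer `n`, the number of distinct diagrams of staircase tableaux
of size `n` using only the symbols `α` and `β` (i.e. distinct sets of nonempty box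
positions occurring among staircase tableaux with no `γ` and no `δ`) equals `n!`. -/
theorem card_staircase_diagrams (n : ℕ) (hn : 1 ≤ n) :
    ((Finset.univ.filter (fun T : StaircaseTableau n =>
        countLetter n T.val SLetter.G = 0 ∧ countLetter n T.val SLetter.D = 0)).image
      (fun T => stDiagram n T.val)).card = n.factorial := by
  classical
  have hinj : Function.Injective (fun A : Finset (Fin n × Fin n) => A.image (SDaux.em n)) :=
    Finset.image_injective (SDaux.em_inj n)
  rw [← Finset.card_image_of_injective _ hinj, SDaux.image_diags n hn, SDaux.card_Diags]
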